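/- Assume $f$ is continuous, $\vartheta > 2$, $\tau \in (1, q/(q-2))$ with $q > 2$, and: (i) $0 < \vartheta F(x,u) \le u f(x,u)$ for $u \neq 0$ where $F(x,u) = \int_0^u f(x,s)ds$; (ii) $|f(x,u)| \le C|u|^{q-1}$ for $|u|$ large. Then there exists $R > 0$ such that for all $x \in \mathbb{R}^N$ and $|u| \ge R$, $|f(x,u)|^\tau / |u|^\tau \le \tfrac12 u f(x,u) - F(x,u)$. -/

import Mathlib

open MeasureTheory intervalIntegral

theorem stmt_3 {N : ℕ} (q τ θ C : ℝ) (hq : 2 < q) (hθ : 2 < θ)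
    (hτ1 : 1 < τ) (hτ : τ < q / (q - 2)) (hC : 0 < C)
    (f : (Fin N → ℝ) → ℝ → ℝ) (hf : Continuous (fun p : (Fin N → ℝ) × ℝ => f p.1 p.2))
    (F : (Fin N → ℝ) → ℝ → ℝ) (hF : ∀ x u, F x u = ∫ s in (0:ℝ)..u, f x s)
    (hAR : ∀ x u, u ≠ 0 → 0 < θ * F x u ∧ θ * F x u ≤ u * f x u)
    (hgrowth : ∃ M : ℝ, ∀ x u, M ≤ |u| → |f x u| ≤ C * |u| ^ (q - 1)) :
    ∃ R : ℝ, 0 < R ∧ ∀ x u, R ≤ |u| →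
      |f x u| ^ τ / |u| ^ τ ≤ 1/2 * (u * f x u) - F x u := by
  obtain ⟨M, hM⟩ := hgrowth
  set c : ℝ := 1/2 - 1/θ with hc_def
  have hθ0 : (0:ℝ) < θ := by linarith
  have hc : 0 < c := by
    have : 1/θ < 1/2 := by
      rw [div_lt_div_iff₀ hθ0 (by norm_num)]; linarith
    simp only [hc_def]; linarith
  set ε : ℝ := (τ + 1) - (q - 1) * (τ - 1) with hε_def
  have hq2 : (0:ℝ) < q - 2 := by linarith
  have hε : 0 < ε := by
    have h1 : τ * (q - 2) < q := (lt_div_iff₀ hq2).mp hτ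
    simp only [hε_def]; nlinarith
  set K : ℝ := max 1 ((C ^ (τ - 1) / c) ^ (1/ε)) with hK_def
  have hK1 : (1:ℝ) ≤ K := le_max_left _ _
  refine ⟨max M K + 1, by positivity, fun x u hu => ?_⟩
  have hu1 : 1 ≤ |u| := by
    have := le_max_right M K
    linarith
  have huK : K ≤ |u| := by
    have := le_max_right M K; linarith
  have hu0 : u ≠ 0 := by
    intro h; rw [h] at hu1; simp at hu1; linarith
  have huM : M ≤ |u| := by
    have := le_max_left M K; linarith
  obtain ⟨hF0, hFf⟩ := hAR x u hu0
  have huf : 0 < u * f x u := lt_of_lt_of_le hF0 hFf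
  have habs : u * f x u = |u| * |f x u| := by
    rw [← abs_mul, abs_of_pos huf]
  have hfpos : 0 < |f x u| := by
    by_contra h
    push_neg at h
    have : |f x u| = 0 := le_antisymm h (abs_nonneg _)
    rw [habs, this, mul_zero] at huf; exact lt_irrefl _ huf
  have hfb : |f x u| ≤ C * |u| ^ (q - 1) := hM x u huM
  have hupos : 0 < |u| := by linarith
  -- RHS lower bound: 1/2 * uf - F ≥ c * |u| * |f|
  have hFle : F x u ≤ (u * f x u) / θ := by
    rw [le_div_iff₀ hθ0]; linarith [hFf]
  have hRHS : c * (|u| * |f x u|) ≤ 1/2 * (u * f x u) - F x u := by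
    rw [← habs]
    have h1 : c * (u * f x u) = 1/2 * (u * f x u) - (u * f x u) / θ := by
      rw [hc_def]; field_simp
    rw [h1]
    linarith [hFle]
  refine le_trans ?_ hRHS
  -- LHS bound
  rw [div_le_iff₀ (Real.rpow_pos_of_pos hupos τ)]
  -- goal: |f|^τ ≤ c * (|u| * |f|) * |u|^τ
  have hstep1 : |f x u| ^ τ = |f x u| ^ (τ - 1) * |f x u| := by
    rw [← Real.rpow_add_one (ne_of_gt hfpos)]; ring_nf
  have hstep2 : |f x u| ^ (τ - 1) ≤ C ^ (τ - 1) * |u| ^ ((q - 1) * (τ - 1)) := by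
    calc |f x u| ^ (τ - 1) ≤ (C * |u| ^ (q - 1)) ^ (τ - 1) :=
          Real.rpow_le_rpow (abs_nonneg _) hfb (by linarith)
      _ = C ^ (τ - 1) * |u| ^ ((q - 1) * (τ - 1)) := by
          rw [Real.mul_rpow (le_of_lt hC) (Real.rpow_nonneg (abs_nonneg _) _),
            ← Real.rpow_mul (abs_nonneg _)]
  have hKey : C ^ (τ - 1) * |u| ^ ((q - 1) * (τ - 1)) ≤ c * (|u| * |u| ^ τ) := by
    have huε : C ^ (τ - 1) / c ≤ |u| ^ ε := by
      calc C ^ (τ - 1) / c = ((C ^ (τ - 1) / c) ^ (1/ε)) ^ ε := by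
            rw [← Real.rpow_mul (by positivity), one_div, inv_mul_cancel₀ (ne_of_gt hε),
              Real.rpow_one]
        _ ≤ K ^ ε := Real.rpow_le_rpow (Real.rpow_nonneg (by positivity) _)
            (le_max_right _ _) (le_of_lt hε)
        _ ≤ |u| ^ ε := Real.rpow_le_rpow (by linarith) huK (le_of_lt hε)
    have hsplit : |u| * |u| ^ τ = |u| ^ ((q - 1) * (τ - 1)) * |u| ^ ε := by
      rw [← Real.rpow_add hupos, ← Real.rpow_one_add' (le_of_lt hupos) (by simp [hε_def]; nlinarith [hε])]
      congr 1; simp [hε_def]; ring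
    rw [hsplit]
    calc C ^ (τ - 1) * |u| ^ ((q - 1) * (τ - 1))
        ≤ (c * |u| ^ ε) * |u| ^ ((q - 1) * (τ - 1)) := by
          apply mul_le_mul_of_nonneg_right _ (Real.rpow_nonneg (abs_nonneg _) _)
          rw [div_le_iff₀ hc] at huε; linarith [huε]
      _ = c * (|u| ^ ((q - 1) * (τ - 1)) * |u| ^ ε) := by ring
  calc |f x u| ^ τ = |f x u| ^ (τ - 1) * |f x u| := hstep1
    _ ≤ (C ^ (τ - 1) * |u| ^ ((q - 1) * (τ - 1))) * |f x u| :=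
        mul_le_mul_of_nonneg_right hstep2 (abs_nonneg _)
    _ ≤ (c * (|u| * |u| ^ τ)) * |f x u| :=
        mul_le_mul_of_nonneg_right hKey (abs_nonneg _)
    _ = c * (|u| * |f x u|) * |u| ^ τ := by ring
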